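/- Let A be a k-algebra and G a finite group acting on A by algebra automorphisms, with |G| invertible in k. The map ν from the Hochschild chain complex of the crossed product A⋊G to ⊕_{g ∈ G} C_•(A; A_g), sending (a_0, σ_0) ⊗ ⋯ ⊗ (a_m, σ_m) to (σ_0⋯σ_m)^{-1}(a_0) ⊗ (σ_1⋯σ_m)^{-1}(a_1) ⊗ ⋯ ⊗ σ_m^{-1}(a_m) placed in the summand indexed by g = (σ_0⋯σ_m)^{-1}, is a chain map into the G-coinvariants of ⊕_{g ∈ G} C_•(A; A_g), where C_•(A; A_g) is the Hochschild complex with coefficients in the bimodule A twisted on the left by g. -/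

import Mathlib

open scoped TensorProduct
open PiTensorProduct

section

variable (k : Type) [CommRing k] (A : Type) [Ring A] [Algebra k A]
variable (G : Type) [Group G] [Fintype G] [DecidableEq G]
variable (act : G →* (A ≃ₐ[k] A))

/-- The Hochschild-type differential evaluated on an elementary `(m+1)`-tuple:
the alternating sum of the face maps (merging adjacent entries using the
multiplication `mulB`) together with the cyclic face, in which the last entry
is first twisted by `tw` and then multiplied onto the zeroth entry. -/
noncomputable def tupleD {B : Type} [AddCommGroup B] [Module k B]
    (mulB : B → B → B) (tw : B → B) {m : ℕ} (v : Fin (m + 1) → B) :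
    ⨂[k]^m B :=
  (∑ i : Fin m, ((-1 : ℤ) ^ (i : ℕ)) •
      tprod k (fun j : Fin m =>
        if (j : ℕ) < (i : ℕ) then v (Fin.castSucc j)
        else if (j : ℕ) = (i : ℕ) then mulB (v (Fin.castSucc j)) (v (Fin.succ j))
        else v (Fin.succ j)))
  + ((-1 : ℤ) ^ m) •
      tprod k (fun j : Fin m =>
        if (j : ℕ) = 0 then mulB (tw (v (Fin.last m))) (v 0)
        else v (Fin.castSucc j))

/-- Multiplication in the crossed product `A ⋊ G` on elementary elements:
`(a, g)·(b, h) = (a·g(b), gh)`. -/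
def pairMul (p q : A × G) : A × G := (p.1 * act p.2 q.1, p.2 * q.2)

/-- `tailProd x j = σ_j ⋯ σ_m`, the ordered product of the group components of
an elementary chain from position `j` on. -/
def tailProd {m : ℕ} (x : Fin m → A × G) (j : ℕ) : G :=
  ((List.ofFn fun i => (x i).2).drop j).prod

/-- The map `ν` on an elementary Hochschild chain of `A ⋊ G`:
`(a_0, σ_0) ⊗ ⋯ ⊗ (a_m, σ_m)` is sent to
`(σ_0⋯σ_m)⁻¹(a_0) ⊗ (σ_1⋯σ_m)⁻¹(a_1) ⊗ ⋯ ⊗ σ_m⁻¹(a_m)`, placed in the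
summand indexed by `g = (σ_0⋯σ_m)⁻¹` of `⊕_{g ∈ G} C_•(A; A_g)`. -/
noncomputable def nuTup {m : ℕ} (x : Fin (m + 1) → A × G) :
    G → ⨂[k]^(m + 1) A :=
  fun g => if g = (tailProd A G x 0)⁻¹
    then tprod k (fun j : Fin (m + 1) => act ((tailProd A G x (j : ℕ))⁻¹) ((x j).1))
    else 0

/-- The `G`-action on `⊕_{g ∈ G} C_•(A; A_g)`: `h` maps the summand `g` to the
summand `h g h⁻¹`, applying `h` to each tensor factor. -/
noncomputable def gact {ℓ : ℕ} (h : G) (f : G → ⨂[k]^ℓ A) : G → ⨂[k]^ℓ A :=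
  fun g => PiTensorProduct.map (fun _ => (act h).toLinearMap) (f (h⁻¹ * g * h))

/-- The submodule of `⊕_{g ∈ G} C_•(A; A_g)` by which one quotients to obtain
the `G`-coinvariants. -/
noncomputable def coinvSub (ℓ : ℕ) : Submodule k (G → ⨂[k]^ℓ A) :=
  Submodule.span k {x | ∃ (h : G) (f : G → ⨂[k]^ℓ A), x = f - gact k A G act h f}

/-- The `i`-th face of an elementary chain of `A ⋊ G`, merging the entries `i`
and `i+1` using the crossed-product multiplication. -/
def cpFace {m : ℕ} (i : Fin (m + 1)) (x : Fin (m + 2) → A × G) :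
    Fin (m + 1) → A × G :=
  fun j =>
    if (j : ℕ) < (i : ℕ) then x (Fin.castSucc j)
    else if (j : ℕ) = (i : ℕ) then
      pairMul k A G act (x (Fin.castSucc j)) (x (Fin.succ j))
    else x (Fin.succ j)

/-- The cyclic face of an elementary chain of `A ⋊ G`: the last entry is
multiplied onto the zeroth one (in the crossed product). -/
def cpCyc {m : ℕ} (x : Fin (m + 2) → A × G) : Fin (m + 1) → A × G :=
  fun j =>
    if (j : ℕ) = 0 then pairMul k A G act (x (Fin.last (m + 1))) (x 0)
    else x (Fin.castSucc j)

lemma tailProd_of_le {m : ℕ} (x : Fin m → A × G) {j : ℕ} (h : m ≤ j) :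
    tailProd A G x j = 1 := by
  unfold tailProd
  rw [List.drop_eq_nil_of_le (by simpa using h), List.prod_nil]

lemma tailProd_lt {m : ℕ} (x : Fin m → A × G) {j : ℕ} (h : j < m) :
    tailProd A G x j = (x ⟨j, h⟩).2 * tailProd A G x (j + 1) := by
  unfold tailProd
  rw [List.drop_eq_getElem_cons (by simpa using h), List.prod_cons, List.getElem_ofFn]

lemma tailProd_cpFace {m : ℕ} (i : Fin (m + 1)) (x : Fin (m + 2) → A × G) (j : ℕ) :
    tailProd A G (cpFace k A G act i x) j
      = if j ≤ (i : ℕ) then tailProd A G x j else tailProd A G x (j + 1) := by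
  have main : ∀ d j, m + 2 - j ≤ d → tailProd A G (cpFace k A G act i x) j
      = if j ≤ (i : ℕ) then tailProd A G x j else tailProd A G x (j + 1) := by
    intro d
    induction d with
    | zero =>
      intro j hj
      have hji : ¬ j ≤ (i : ℕ) := by have := i.isLt; omega
      rw [if_neg hji, tailProd_of_le A G _ (by omega : m + 1 ≤ j),
        tailProd_of_le A G _ (by omega : m + 2 ≤ j + 1)]
    | succ d ih =>
      intro j hj
      by_cases hbig : m + 1 ≤ j
      · have hji : ¬ j ≤ (i : ℕ) := by have := i.isLt; omega
        rw [if_neg hji, tailProd_of_le A G _ (by omega : m + 1 ≤ j),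
          tailProd_of_le A G _ (by omega : m + 2 ≤ j + 1)]
      · have hjm : j < m + 1 := by omega
        rw [tailProd_lt A G _ hjm, ih (j + 1) (by omega)]
        rcases lt_trichotomy j (i : ℕ) with hlt | heq | hgt
        · rw [if_pos (by omega), if_pos (by omega),
            tailProd_lt A G x (show j < m + 2 by omega)]
          congr 1
          show (cpFace k A G act i x ⟨j, hjm⟩).2 = _
          rw [cpFace, if_pos (by first | omega | (simp only [Fin.val_mk]; omega))]
          rfl
        · rw [if_neg (by first | omega | (simp only [Fin.val_mk]; omega)), if_pos (by omega),
            tailProd_lt A G x (show j < m + 2 by omega),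
            tailProd_lt A G x (show j + 1 < m + 2 by omega), ← mul_assoc]
          congr 1
          show (cpFace k A G act i x ⟨j, hjm⟩).2 = _
          rw [cpFace, if_neg (by first | omega | (simp only [Fin.val_mk]; omega)), if_pos (by first | omega | (simp only [Fin.val_mk]; omega))]
          rfl
        · rw [if_neg (by first | omega | (simp only [Fin.val_mk]; omega)), if_neg (by first | omega | (simp only [Fin.val_mk]; omega)),
            tailProd_lt A G x (show j + 1 < m + 2 by omega)]
          congr 1
          show (cpFace k A G act i x ⟨j, hjm⟩).2 = _
          rw [cpFace, if_neg (by first | omega | (simp only [Fin.val_mk]; omega)), if_neg (by first | omega | (simp only [Fin.val_mk]; omega))]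
          rfl
  exact main _ j le_rfl

lemma tailProd_last {m : ℕ} (x : Fin (m + 2) → A × G) :
    tailProd A G x (m + 1) = (x (Fin.last (m + 1))).2 := by
  rw [tailProd_lt A G x (show m + 1 < m + 2 by omega),
    tailProd_of_le A G x (le_refl (m + 2)), mul_one]
  rfl

lemma tailProd_cpCyc {m : ℕ} (x : Fin (m + 2) → A × G) :
    ∀ j, 1 ≤ j → j ≤ m + 1 →
    tailProd A G (cpCyc k A G act x) j
      = tailProd A G x j * (x (Fin.last (m + 1))).2⁻¹ := by
  have main : ∀ d j, 1 ≤ j → j ≤ m + 1 → m + 1 - j ≤ d →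
      tailProd A G (cpCyc k A G act x) j
        = tailProd A G x j * (x (Fin.last (m + 1))).2⁻¹ := by
    intro d
    induction d with
    | zero =>
      intro j h1 h2 hd
      have hj : j = m + 1 := by omega
      subst hj
      rw [tailProd_of_le A G _ (le_refl (m + 1)), tailProd_last,
        mul_inv_cancel]
    | succ d ih =>
      intro j h1 h2 hd
      by_cases hlast : j = m + 1
      · subst hlast
        rw [tailProd_of_le A G _ (le_refl (m + 1)), tailProd_last,
          mul_inv_cancel]
      · have hjm : j < m + 1 := by omega
        rw [tailProd_lt A G _ hjm, ih (j + 1) (by omega) (by omega) (by omega),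
          tailProd_lt A G x (show j < m + 2 by omega), mul_assoc]
        congr 1
        show (cpCyc k A G act x ⟨j, hjm⟩).2 = _
        rw [cpCyc, if_neg (by simpa using (by omega : ¬ j = 0))]
        rfl
  exact fun j h1 h2 => main _ j h1 h2 le_rfl

lemma tailProd_cpCyc_zero {m : ℕ} (x : Fin (m + 2) → A × G) :
    tailProd A G (cpCyc k A G act x) 0
      = (x (Fin.last (m + 1))).2 * tailProd A G x 0 * (x (Fin.last (m + 1))).2⁻¹ := by
  rw [tailProd_lt A G _ (show 0 < m + 1 by omega),
    tailProd_cpCyc k A G act x 1 le_rfl (by omega),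
    tailProd_lt A G x (show 0 < m + 2 by omega)]
  show (cpCyc k A G act x ⟨0, _⟩).2 * _ = _
  rw [cpCyc, if_pos rfl]
  show ((x (Fin.last (m+1))).2 * (x 0).2) * _ = _
  have : (x ⟨0, by omega⟩) = x 0 := rfl
  rw [this, mul_assoc, mul_assoc, mul_assoc]

lemma act_mul_apply (u v : G) (a : A) : act (u * v) a = act u (act v a) := by
  rw [_root_.map_mul, AlgEquiv.mul_apply]

set_option maxHeartbeats 1600000 in
/-- `ν` is a chain map from the Hochschild complex of the crossed product
`A ⋊ G` into the `G`-coinvariants of `⊕_{g ∈ G} C_•(A; A_g)`: on every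
elementary chain `x`, `ν` applied to the Hochschild differential of `x` agrees,
modulo coinvariants, with the `g`-twisted Hochschild differential applied to
`ν(x)` (computed in the summand `g = (σ_0⋯σ_m)⁻¹`). -/
theorem nu_chain_map (hG : Invertible ((Fintype.card G : k)))
    (m : ℕ) (x : Fin (m + 2) → A × G) :
    Submodule.Quotient.mk (p := coinvSub k A G act (m + 1))
      ((∑ i : Fin (m + 1), ((-1 : ℤ) ^ (i : ℕ)) •
          nuTup k A G act (cpFace k A G act i x))
        + ((-1 : ℤ) ^ (m + 1)) • nuTup k A G act (cpCyc k A G act x))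
    = Submodule.Quotient.mk (p := coinvSub k A G act (m + 1))
      (fun g => if g = (tailProd A G x 0)⁻¹
        then tupleD k (· * ·) (act g)
          (fun j : Fin (m + 2) => act ((tailProd A G x (j : ℕ))⁻¹) ((x j).1))
        else 0) := by
  classical
  set σ := (x (Fin.last (m + 1))).2 with hσ
  set g0 : G := (tailProd A G x 0)⁻¹ with hg0
  set b : Fin (m + 2) → A := fun j => act ((tailProd A G x (j : ℕ))⁻¹) ((x j).1) with hb
  set f : G → ⨂[k]^(m + 1) A := fun g => if g = g0 then
      tprod k (fun j : Fin (m + 1) =>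
        if (j : ℕ) = 0 then act g0 (b (Fin.last (m + 1))) * b 0
        else b (Fin.castSucc j)) else 0 with hf
  -- Claim 1: each face of ν
  have face_eq : ∀ i : Fin (m + 1), nuTup k A G act (cpFace k A G act i x)
      = fun g => if g = g0 then
          tprod k (fun j : Fin (m + 1) =>
            if (j : ℕ) < (i : ℕ) then b (Fin.castSucc j)
            else if (j : ℕ) = (i : ℕ) then b (Fin.castSucc j) * b (Fin.succ j)
            else b (Fin.succ j)) else 0 := by
    intro i
    funext g
    rw [nuTup, tailProd_cpFace k A G act i x 0, if_pos (Nat.zero_le _)]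
    by_cases hg : g = g0
    · rw [if_pos hg, if_pos hg]
      congr 1
      funext j
      rw [tailProd_cpFace k A G act i x (j : ℕ)]
      rcases lt_trichotomy (j : ℕ) (i : ℕ) with hlt | heq | hgt
      · rw [if_pos (le_of_lt hlt), if_pos hlt]
        show act ((tailProd A G x (j:ℕ))⁻¹) ((cpFace k A G act i x j).1) = _
        rw [cpFace, if_pos hlt, hb]
        simp only [Fin.coe_castSucc]
      · rw [if_pos (le_of_eq heq), if_neg (by omega), if_pos heq]
        show act ((tailProd A G x (j:ℕ))⁻¹) ((cpFace k A G act i x j).1) = _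
        rw [cpFace, if_neg (by omega), if_pos heq, pairMul]
        have hT : tailProd A G x (j : ℕ)
            = (x (Fin.castSucc j)).2 * tailProd A G x ((j : ℕ) + 1) := by
          rw [tailProd_lt A G x (show (j:ℕ) < m + 2 by omega)]
          congr 2
        have hkey : (tailProd A G x (j:ℕ))⁻¹ * (x (Fin.castSucc j)).2
            = (tailProd A G x ((j:ℕ) + 1))⁻¹ := by
          rw [hT]; group
        show act ((tailProd A G x (j:ℕ))⁻¹)
            ((x (Fin.castSucc j)).1 * act (x (Fin.castSucc j)).2 ((x (Fin.succ j)).1)) = _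
        rw [_root_.map_mul, ← act_mul_apply, hkey, hb]
        simp only [Fin.coe_castSucc, Fin.val_succ]
      · rw [if_neg (by omega), if_neg (by omega), if_neg (by omega)]
        show act ((tailProd A G x ((j:ℕ)+1))⁻¹) ((cpFace k A G act i x j).1) = _
        rw [cpFace, if_neg (by omega), if_neg (by omega), hb]
        simp only [Fin.val_succ]
    · rw [if_neg hg, if_neg hg]
  -- Claim 2: the cyclic face of ν equals gact σ f
  have cyc_eq : nuTup k A G act (cpCyc k A G act x) = gact k A G act σ f := by
    funext g
    rw [nuTup, gact, tailProd_cpCyc_zero k A G act x, ← hσ]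
    by_cases hc : σ⁻¹ * g * σ = g0
    · have hc' : σ⁻¹ * g * σ = (tailProd A G x 0)⁻¹ := hc
      have hg : g = (σ * tailProd A G x 0 * σ⁻¹)⁻¹ := by
        have h' : g = σ * (tailProd A G x 0)⁻¹ * σ⁻¹ := by rw [← hc']; group
        rw [h']; group
      rw [if_pos hg]
      simp only [hf]
      rw [if_pos hc, PiTensorProduct.map_tprod]
      congr 1
      funext j
      by_cases hj0 : (j : ℕ) = 0
      · have hj : j = 0 := by ext; simpa using hj0
        subst hj
        simp only [Fin.val_zero, if_true, eq_self_iff_true]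
        show act ((tailProd A G (cpCyc k A G act x) 0)⁻¹) ((cpCyc k A G act x 0).1) = _
        rw [tailProd_cpCyc_zero k A G act x, ← hσ, cpCyc, if_pos hj0, pairMul]
        show act ((σ * tailProd A G x 0 * σ⁻¹)⁻¹)
            ((x (Fin.last (m+1))).1 * act σ ((x 0).1)) = _
        have h1 : (σ * tailProd A G x 0 * σ⁻¹)⁻¹ = σ * g0 * σ⁻¹ := by rw [hg0]; group
        have hlastT : (tailProd A G x ((Fin.last (m + 1) : Fin (m + 2)) : ℕ))⁻¹ = σ⁻¹ := by
          show (tailProd A G x (m + 1))⁻¹ = σ⁻¹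
          rw [tailProd_last, hσ]
        have h0T : (tailProd A G x ((0 : Fin (m + 2)) : ℕ))⁻¹ = g0 := by
          rw [hg0]; rfl
        have hcan : ∀ a : A, act σ⁻¹ (act σ a) = a := by
          intro a
          rw [← act_mul_apply, inv_mul_cancel]
          simp
        simp only [AlgEquiv.toLinearMap_apply, hb, hlastT, h0T, h1, _root_.map_mul,
          AlgEquiv.mul_apply, hcan]
      · rw [if_neg hj0]
        have hj1 : 1 ≤ (j : ℕ) := by omega
        show act ((tailProd A G (cpCyc k A G act x) (j:ℕ))⁻¹) ((cpCyc k A G act x j).1) = _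
        rw [tailProd_cpCyc k A G act x (j:ℕ) hj1 (by omega), ← hσ,
          cpCyc, if_neg hj0]
        simp only [AlgEquiv.toLinearMap_apply, hb]
        show act ((tailProd A G x (j:ℕ) * σ⁻¹)⁻¹) ((x (Fin.castSucc j)).1)
          = act σ (act ((tailProd A G x ((Fin.castSucc j : Fin (m+2)) : ℕ))⁻¹) ((x (Fin.castSucc j)).1))
        rw [← act_mul_apply]
        have : (tailProd A G x (j:ℕ) * σ⁻¹)⁻¹
            = σ * (tailProd A G x ((Fin.castSucc j : Fin (m+2)) : ℕ))⁻¹ := by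
          simp only [Fin.coe_castSucc]
          group
        rw [this]
    · have hg : ¬ g = (σ * tailProd A G x 0 * σ⁻¹)⁻¹ := by
        intro h
        apply hc
        rw [h, hg0]; group
      rw [if_neg hg]
      simp only [hf]
      rw [if_neg hc, map_zero]
  -- Assemble
  rw [Submodule.Quotient.eq]
  have sum_eq : (∑ i : Fin (m + 1), ((-1 : ℤ) ^ (i : ℕ)) •
          nuTup k A G act (cpFace k A G act i x))
      = fun g => if g = g0 then
          (∑ i : Fin (m + 1), ((-1 : ℤ) ^ (i : ℕ)) •
            tprod k (fun j : Fin (m + 1) =>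
              if (j : ℕ) < (i : ℕ) then b (Fin.castSucc j)
              else if (j : ℕ) = (i : ℕ) then b (Fin.castSucc j) * b (Fin.succ j)
              else b (Fin.succ j))) else 0 := by
    funext g
    rw [Finset.sum_apply]
    by_cases hg : g = g0
    · rw [if_pos hg]
      refine Finset.sum_congr rfl (fun i _ => ?_)
      rw [face_eq i]
      simp [hg]
    · rw [if_neg hg]
      refine Finset.sum_eq_zero (fun i _ => ?_)
      rw [face_eq i]
      simp [hg]
  have rhs_eq : (fun g => if g = g0 then tupleD k (· * ·) (act g) b else 0)
      = (fun g => if g = g0 then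
          (∑ i : Fin (m + 1), ((-1 : ℤ) ^ (i : ℕ)) •
            tprod k (fun j : Fin (m + 1) =>
              if (j : ℕ) < (i : ℕ) then b (Fin.castSucc j)
              else if (j : ℕ) = (i : ℕ) then b (Fin.castSucc j) * b (Fin.succ j)
              else b (Fin.succ j))) else 0) + ((-1 : ℤ) ^ (m + 1)) • f := by
    funext g
    simp only [Pi.add_apply, Pi.smul_apply, hf]
    by_cases hg : g = g0
    · simp only [hg, eq_self_iff_true, if_true, tupleD]
    · simp [hg]
  have hmem : f - gact k A G act σ f ∈ coinvSub k A G act (m + 1) :=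
    Submodule.subset_span ⟨σ, f, rfl⟩
  have hmem2 : gact k A G act σ f - f ∈ coinvSub k A G act (m + 1) := by
    have := Submodule.neg_mem _ hmem
    rwa [neg_sub] at this
  have hmem3 := zsmul_mem hmem2 ((-1 : ℤ) ^ (m + 1))
  rw [sum_eq, cyc_eq, rhs_eq]
  convert hmem3 using 1
  rw [show ((-1 : ℤ) ^ (m + 1)) • (gact k A G act σ f - f)
      = ((-1 : ℤ) ^ (m + 1)) • gact k A G act σ f - ((-1 : ℤ) ^ (m + 1)) • f
    from zsmul_sub _ _ _]
  exact add_sub_add_left_eq_sub _ _ _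


end
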